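/- Let H be a real Hilbert space, φ : H → ℝ a convex lower semicontinuous function with φ(y) ≥ φ(0) = 0 for all y ∈ H, and let ε > 0. Then for every u ∈ H the function v ↦ (1/2)‖u − v‖² + ε·φ(v) attains its infimum over H at a unique point J_ε(u); moreover (1/ε)·(u − J_ε(u)) is a subgradient of φ at J_ε(u), i.e. ⟨(1/ε)(u − J_ε(u)), v − J_ε(u)⟩ + φ(J_ε(u)) ≤ φ(v) for all v ∈ H. -/

import Mathlib

open RealInnerProductSpace


private lemma stmt0_aux {H : Type*} [NormedAddCommGroup H] [InnerProductSpace ℝ H]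
    (φ : H → ℝ) (ε : ℝ) (hε : 0 < ε) (u j v : H) (δ t : ℝ)
    (hδ_def : δ = ⟪u - j, v - j⟫ - ε * (φ v - φ j)) (hδpos : 0 < δ)
    (ht0 : 0 < t) (htδ : t * (‖v - j‖^2 + 1) ≤ δ)
    (hcomb : φ (j + t • (v - j)) ≤ (1 - t) * φ j + t * φ v)
    (hmin' : (1/2) * ‖u - j‖^2 + ε * φ j ≤
      (1/2) * (‖u - j‖^2 - 2 * (t * ⟪u - j, v - j⟫) + t^2 * ‖v - j‖^2) + ε * φ (j + t • (v - j))) :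
    False := by
  have h9 := mul_le_mul_of_nonneg_left hcomb hε.le
  have hkey : t * ⟪u - j, v - j⟫ ≤ (t^2/2) * ‖v - j‖^2 + ε * t * (φ v - φ j) := by
    nlinarith [h9, hmin']
  have ht2 : t * ‖v - j‖^2 ≤ δ - t := by nlinarith [htδ]
  nlinarith [mul_pos ht0 hδpos, mul_le_mul_of_nonneg_left ht2 ht0.le, sq_nonneg t, hkey, hδ_def]

/-- existence and uniqueness of the minimizer `J_ε u` of
`v ↦ (1/2)‖u − v‖² + ε·φ(v)`, and `(1/ε)(u − J_ε u)` is a subgradient of `φ` at `J_ε u`. -/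
theorem stmt_0 {H : Type*} [NormedAddCommGroup H] [InnerProductSpace ℝ H] [CompleteSpace H]
    (φ : H → ℝ) (hconv : ConvexOn ℝ Set.univ φ) (hlsc : LowerSemicontinuous φ)
    (hφ0 : φ 0 = 0) (hφnn : ∀ y : H, 0 ≤ φ y) (ε : ℝ) (hε : 0 < ε) (u : H) :
    ∃ j : H,
      (∀ v : H, (1/2) * ‖u - j‖^2 + ε * φ j ≤ (1/2) * ‖u - v‖^2 + ε * φ v) ∧
      (∀ j' : H,
        (∀ v : H, (1/2) * ‖u - j'‖^2 + ε * φ j' ≤ (1/2) * ‖u - v‖^2 + ε * φ v) → j' = j) ∧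
      (∀ v : H, ⟪(1/ε) • (u - j), v - j⟫ + φ j ≤ φ v) := by
  set F : H → ℝ := fun v => (1/2) * ‖u - v‖^2 + ε * φ v with hF_def
  have hFnn : ∀ v, 0 ≤ F v := fun v => by
    have h1 := hφnn v; have h2 : (0:ℝ) ≤ ‖u - v‖^2 := sq_nonneg _
    simp only [hF_def]; nlinarith
  have hsc : ∀ v w : H, F ((1/2:ℝ) • v + (1/2:ℝ) • w) ≤
      (1/2) * F v + (1/2) * F w - (1/8) * ‖v - w‖^2 := by
    intro v w
    have hpar := parallelogram_law_with_norm ℝ (u - v) (u - w)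
    have hmid : u - ((1/2:ℝ) • v + (1/2:ℝ) • w) = (1/2:ℝ) • ((u - v) + (u - w)) := by
      module
    have hn : ‖u - ((1/2:ℝ) • v + (1/2:ℝ) • w)‖^2 = (1/4) * ‖(u - v) + (u - w)‖^2 := by
      rw [hmid, norm_smul]; simp; ring
    have hvw : (u - v) - (u - w) = w - v := by abel
    have hvw' : ‖w - v‖ = ‖v - w‖ := by rw [norm_sub_rev]
    rw [hvw, hvw'] at hpar
    have hφmid : φ ((1/2:ℝ) • v + (1/2:ℝ) • w) ≤ (1/2) * φ v + (1/2) * φ w :=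
      hconv.2 (Set.mem_univ v) (Set.mem_univ w) (by norm_num) (by norm_num) (by norm_num)
    simp only [hF_def]
    rw [hn]
    nlinarith [hε.le]
  have hFlsc : LowerSemicontinuous F := by
    rw [hF_def]
    have h1 : Continuous (fun v : H => (1/2) * ‖u - v‖^2) := by continuity
    have h2 : LowerSemicontinuous (fun v => ε * φ v) := by
      have hg : Continuous (fun y : ℝ => ε * y) := by continuity
      exact hg.comp_lowerSemicontinuous hlsc (fun a b h => by nlinarith)
    exact h1.lowerSemicontinuous.add h2
  have hne : (Set.range F).Nonempty := ⟨F 0, ⟨0, rfl⟩⟩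
  have hbdd : BddBelow (Set.range F) := ⟨0, fun y ⟨v, hv⟩ => hv ▸ hFnn v⟩
  clear_value F
  obtain ⟨m, hmle, hmin_seq⟩ : ∃ m : ℝ, (∀ v, m ≤ F v) ∧
      (∀ n : ℕ, ∃ x : H, F x < m + 1/(n+1)) := by
    refine ⟨sInf (Set.range F), fun v => csInf_le hbdd ⟨v, rfl⟩, fun n => ?_⟩
    have hlt : sInf (Set.range F) < sInf (Set.range F) + 1/((n:ℝ)+1) :=
      lt_add_of_pos_right _ (by positivity)
    obtain ⟨y, ⟨v, hv⟩, hy⟩ := exists_lt_of_csInf_lt hne hlt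
    exact ⟨v, hv ▸ hy⟩
  choose x hx using hmin_seq
  have hdist : ∀ n k : ℕ, ‖x n - x k‖^2 ≤ 8 * (1/(n+1)) + 8 * (1/(k+1)) := by
    intro n k
    have h1 := hsc (x n) (x k)
    have h2 := hmle ((1/2:ℝ) • x n + (1/2:ℝ) • x k)
    have h3 := hx n; have h4 := hx k
    nlinarith
  have hcauchy : CauchySeq x := by
    rw [Metric.cauchySeq_iff]
    intro r hr
    obtain ⟨N, hN⟩ := exists_nat_gt (16 * (1 / r^2))
    refine ⟨N, fun n hn k hk => ?_⟩
    have hNpos : (0:ℝ) < N + 1 := by positivity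
    have hb : ∀ i : ℕ, N ≤ i → 1/((i:ℝ)+1) ≤ 1/((N:ℝ)+1) := by
      intro i hi
      apply one_div_le_one_div_of_le hNpos
      have : (N:ℝ) ≤ i := Nat.cast_le.2 hi
      linarith
    have h1 := hdist n k
    have h2 := hb n hn; have h3 := hb k hk
    have hNr : 16 * (1/((N:ℝ)+1)) < r^2 := by
      rw [mul_one_div, div_lt_iff₀ (by positivity : (0:ℝ) < r^2)] at hN
      rw [mul_one_div, div_lt_iff₀ hNpos]
      nlinarith [pow_pos hr 2]
    have h5 : ‖x n - x k‖^2 < r^2 := by linarith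
    rw [dist_eq_norm]
    nlinarith [norm_nonneg (x n - x k)]
  obtain ⟨j, hj⟩ := cauchySeq_tendsto_of_complete hcauchy
  have hFj : F j ≤ m := by
    by_contra hcon
    push_neg at hcon
    have hy1 : (m + F j)/2 < F j := by linarith
    have hev1 : ∀ᶠ n in Filter.atTop, (m + F j)/2 < F (x n) :=
      hj.eventually (hFlsc j _ hy1)
    have htend : Filter.Tendsto (fun n : ℕ => m + 1/((n:ℝ)+1)) Filter.atTop (nhds m) := by
      have := (tendsto_one_div_add_atTop_nhds_zero_nat :
        Filter.Tendsto (fun n : ℕ => 1 / ((n : ℝ) + 1)) Filter.atTop (nhds 0))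
      simpa using Filter.Tendsto.const_add m this
    have hev2 : ∀ᶠ n : ℕ in Filter.atTop, m + 1/((n:ℝ)+1) < (m + F j)/2 :=
      htend.eventually (gt_mem_nhds (by linarith))
    obtain ⟨n, h1, h2⟩ := (hev1.and hev2).exists
    exact absurd (hx n) (by linarith)
  have hmin : ∀ v, F j ≤ F v := fun v => le_trans hFj (hmle v)
  have hmin2 : ∀ v : H, (1/2) * ‖u - j‖^2 + ε * φ j ≤ (1/2) * ‖u - v‖^2 + ε * φ v := by
    intro v; have := hmin v; simpa only [hF_def] using this
  refine ⟨j, hmin2, ?_, ?_⟩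
  · intro j' hj'
    have h1 := hsc j' j
    have h2 := hmin ((1/2:ℝ) • j' + (1/2:ℝ) • j)
    have h3 : F j' ≤ F j := by simp only [hF_def]; exact hj' j
    have h4 : ‖j' - j‖^2 ≤ 0 := by linarith
    have h5 : ‖j' - j‖^2 = 0 := le_antisymm h4 (sq_nonneg _)
    have h6 : ‖j' - j‖ = 0 := by
      have := sq_eq_zero_iff.1 h5
      exact this
    rwa [norm_sub_eq_zero_iff] at h6
  · intro v
    have key : ⟪u - j, v - j⟫ ≤ ε * (φ v - φ j) := by
      by_contra hcon
      push_neg at hcon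
      obtain ⟨δ, hδ_def, hδpos⟩ : ∃ δ : ℝ, δ = ⟪u - j, v - j⟫ - ε * (φ v - φ j) ∧ 0 < δ :=
        ⟨_, rfl, by linarith⟩
      obtain ⟨t, ht0, ht1, htδ⟩ : ∃ t : ℝ, 0 < t ∧ t ≤ 1 ∧ t * (‖v - j‖^2 + 1) ≤ δ := by
        refine ⟨min 1 (δ / (‖v - j‖^2 + 1)), lt_min one_pos (by positivity),
          min_le_left _ _, ?_⟩
        have h6 : min 1 (δ / (‖v - j‖^2 + 1)) ≤ δ / (‖v - j‖^2 + 1) := min_le_right _ _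
        rw [le_div_iff₀ (by positivity)] at h6
        linarith
      have hcomb : φ (j + t • (v - j)) ≤ (1 - t) * φ j + t * φ v := by
        have heq : j + t • (v - j) = (1 - t) • j + t • v := by module
        rw [heq]
        exact hconv.2 (Set.mem_univ j) (Set.mem_univ v) (by linarith) ht0.le (by ring)
      have hnorm : ‖u - (j + t • (v - j))‖^2 =
          ‖u - j‖^2 - 2 * (t * ⟪u - j, v - j⟫) + t^2 * ‖v - j‖^2 := by
        have h7 : u - (j + t • (v - j)) = (u - j) - t • (v - j) := by abel
        rw [h7, norm_sub_sq_real, real_inner_smul_right, norm_smul,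
          Real.norm_eq_abs, abs_of_pos ht0, mul_pow]
      have hmin' := hmin2 (j + t • (v - j))
      rw [hnorm] at hmin'
      exact stmt0_aux φ ε hε u j v δ t hδ_def hδpos ht0 htδ hcomb hmin'
    rw [real_inner_smul_left]
    have h8 : ⟪u - j, v - j⟫ / ε ≤ φ v - φ j := by
      rw [div_le_iff₀ hε]; linarith
    calc (1/ε) * ⟪u - j, v - j⟫ + φ j = ⟪u - j, v - j⟫ / ε + φ j := by ring
      _ ≤ (φ v - φ j) + φ j := by linarith
      _ = φ v := by ring
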